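/- Let m ≥ 1 and g(z) = cot(πz)/(z^{2m}−1). Then the residue of g at z = 1 equals −(2m−1)/(4mπ), and likewise the residue of g at z = −1 equals −(2m−1)/(4mπ). -/

import Mathlib

open Complex

/-- `ResidueAt f a r` : `r` is the residue of `f` at `a`, expressed via small circle integrals. -/
def ResidueAt (f : ℂ → ℂ) (a r : ℂ) : Prop :=
  ∀ᶠ ε in nhdsWithin (0 : ℝ) (Set.Ioi 0),
    (2 * Real.pi * Complex.I)⁻¹ * (∮ z in C(a, ε), f z) = r

lemma sinDeriv (z : ℂ) : HasDerivAt (fun w : ℂ => Complex.sin (Real.pi * w))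
    ((Real.pi : ℂ) * Complex.cos (Real.pi * z)) z := by
  have h := (Complex.hasDerivAt_sin ((Real.pi : ℂ) * z)).comp z
    ((hasDerivAt_id z).const_mul (Real.pi : ℂ))
  have e : (Real.pi : ℂ) * Complex.cos (Real.pi * z)
      = Complex.cos ((Real.pi : ℂ) * z) * ((Real.pi : ℂ) * 1) := by ring
  rw [e]; exact h

lemma cosDeriv (z : ℂ) : HasDerivAt (fun w : ℂ => Complex.cos (Real.pi * w))
    (-((Real.pi : ℂ) * Complex.sin (Real.pi * z))) z := by
  have h := (Complex.hasDerivAt_cos ((Real.pi : ℂ) * z)).comp z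
    ((hasDerivAt_id z).const_mul (Real.pi : ℂ))
  have e : -((Real.pi : ℂ) * Complex.sin (Real.pi * z))
      = -Complex.sin ((Real.pi : ℂ) * z) * ((Real.pi : ℂ) * 1) := by ring
  rw [e]; exact h

theorem residue_key (m : ℕ) (c q q' : ℂ) (Q : ℂ → ℂ)
    (hQdiff : Differentiable ℂ Q)
    (hfac : ∀ z : ℂ, z ^ (2 * m) - 1 = (z - c) * Q z)
    (hQc : Q c = q) (hq : q ≠ 0) (hQ' : deriv Q c = q')
    (hsin : Complex.sin (Real.pi * c) = 0)
    (hcos : Complex.cos (Real.pi * c) = -1) :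
    ResidueAt (fun z => Complex.cot (Real.pi * z) / (z ^ (2 * m) - 1)) c
      (-(q' / (Real.pi * q ^ 2))) := by
  have hπ : (Real.pi : ℂ) ≠ 0 := ofReal_ne_zero.mpr Real.pi_ne_zero
  set f : ℂ → ℂ := fun w => Complex.sin (Real.pi * w) with hf_def
  have hf : Differentiable ℂ f := fun z => (sinDeriv z).differentiableAt
  have hfderiv : deriv f = fun z => (Real.pi : ℂ) * Complex.cos (Real.pi * z) :=
    funext fun z => (sinDeriv z).deriv
  set S : ℂ → ℂ := dslope f c with hS_def
  have hSc : S c = -(Real.pi : ℂ) := by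
    rw [hS_def, dslope_same, hfderiv]
    show (Real.pi : ℂ) * Complex.cos (Real.pi * c) = _
    rw [hcos]; ring
  have hfS : ∀ z, f z = (z - c) * S z := by
    intro z
    have h := sub_smul_dslope f c z
    rw [smul_eq_mul] at h
    have hfc : f c = 0 := hsin
    rw [hfc, sub_zero] at h
    exact h.symm
  obtain ⟨p, hp⟩ := hf.analyticAt c
  have hSp : HasFPowerSeriesAt S p.fslope c := hp.has_fpower_series_dslope_fslope
  have hSdiff : Differentiable ℂ S := by
    intro z
    rcases eq_or_ne z c with rfl | h
    · exact hSp.analyticAt.differentiableAt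
    · exact (differentiableAt_dslope_of_ne h).2 (hf z)
  have hS'c : deriv S c = 0 := by
    have h1 : deriv S c = p.coeff 2 := by
      rw [hSp.deriv]
      exact FormalMultilinearSeries.coeff_fslope
    obtain ⟨r, hball⟩ := hp
    have h2 := hball.factorial_smul (1 : ℂ) 2
    have h3 : iteratedDeriv 2 f c = 0 := by
      rw [show (2:ℕ) = 1+1 from rfl, iteratedDeriv_succ, iteratedDeriv_one, hfderiv]
      have hd : HasDerivAt (fun z : ℂ => (Real.pi : ℂ) * Complex.cos (Real.pi * z))
          ((Real.pi : ℂ) * -((Real.pi : ℂ) * Complex.sin (Real.pi * c))) c :=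
        (cosDeriv c).const_mul _
      rw [hd.deriv, hsin]; ring
    rw [iteratedDeriv_eq_iteratedFDeriv] at h3
    have h4 : (Nat.factorial 2 : ℕ) • p.coeff 2 = 0 := by
      rw [FormalMultilinearSeries.coeff]
      rw [show ((1 : Fin 2 → ℂ)) = (fun _ => (1:ℂ)) from rfl]
      rw [h2, h3]
    rw [h1]
    have : ((Nat.factorial 2 : ℕ) : ℂ) * p.coeff 2 = 0 := by
      rw [← nsmul_eq_mul]; exact h4
    have hf2 : ((Nat.factorial 2 : ℕ) : ℂ) ≠ 0 := by norm_num [Nat.factorial]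
    exact (mul_eq_zero.mp this).resolve_left hf2
  -- nonvanishing neighborhood
  have hSne : S c ≠ 0 := by rw [hSc]; exact neg_ne_zero.mpr hπ
  have hQne : Q c ≠ 0 := by rw [hQc]; exact hq
  have hev : ∀ᶠ z in nhds c, S z ≠ 0 ∧ Q z ≠ 0 := by
    filter_upwards [hSdiff.continuous.continuousAt.eventually_ne hSne,
      hQdiff.continuous.continuousAt.eventually_ne hQne] with z h1 h2
    exact ⟨h1, h2⟩
  obtain ⟨δ, hδ0, hδ⟩ := Metric.eventually_nhds_iff_ball.mp hev
  set F : ℂ → ℂ := fun z => Complex.cos (Real.pi * z) / (S z * Q z) with hF_def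
  have hFderiv : deriv F c = -(q' / (Real.pi * q ^ 2)) := by
    have hN : DifferentiableAt ℂ (fun z : ℂ => Complex.cos (Real.pi * z)) c :=
      (cosDeriv c).differentiableAt
    have hD : DifferentiableAt ℂ (fun z => S z * Q z) c := (hSdiff c).mul (hQdiff c)
    have hDne : S c * Q c ≠ 0 := mul_ne_zero hSne hQne
    have h1 : deriv F c = (deriv (fun z : ℂ => Complex.cos (Real.pi * z)) c * (S c * Q c)
        - Complex.cos (Real.pi * c) * deriv (fun z => S z * Q z) c) / (S c * Q c) ^ 2 :=
      deriv_div hN hD hDne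
    rw [h1, (cosDeriv c).deriv, deriv_fun_mul (hSdiff c) (hQdiff c), hS'c, hSc, hQc, hQ', hcos, hsin]
    field_simp
    ring
  unfold ResidueAt
  filter_upwards [Ioo_mem_nhdsGT_of_mem (Set.left_mem_Ico.mpr hδ0)] with ε hε
  obtain ⟨hε0, hεδ⟩ := hε
  have hsub : Metric.closedBall c ε ⊆ Metric.ball c δ := Metric.closedBall_subset_ball hεδ
  have hFdiff : DifferentiableOn ℂ F (Metric.closedBall c ε) := by
    intro z hz
    obtain ⟨h1, h2⟩ := hδ z (hsub hz)
    exact (((cosDeriv z).differentiableAt.div ((hSdiff z).mul (hQdiff z))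
      (mul_ne_zero h1 h2))).differentiableWithinAt
  have hdc : DiffContOnCl ℂ F (Metric.ball c ε) :=
    (hFdiff.mono Metric.closure_ball_subset_closedBall).diffContOnCl
  have hkey : deriv F c = (2 * Real.pi * Complex.I : ℂ)⁻¹ • (∮ z in C(c, ε), (z - c) ^ (-2 : ℤ) • F z) := by
    have := hdc.deriv_eq_smul_circleIntegral hε0
    have hI : (2 * Real.pi * Complex.I : ℂ) ≠ 0 := by simp [hπ, Complex.I_ne_zero]
    have e : ∀ z : ℂ, (z - c) ^ (-2 : ℤ) = ((z - c) ^ 2)⁻¹ := fun z => by rw [zpow_neg, zpow_ofNat]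
    simp only [one_div] at this
    simp only [e, this]; exact (inv_smul_smul₀ hI _).symm
  have hEq : (∮ z in C(c, ε), Complex.cot (Real.pi * z) / (z ^ (2 * m) - 1)) =
      ∮ z in C(c, ε), (z - c) ^ (-2 : ℤ) • F z := by
    refine circleIntegral.integral_congr hε0.le fun z hz => ?_
    have hzc : z ≠ c := by
      intro h
      rw [Metric.mem_sphere, h, dist_self] at hz
      exact hε0.ne hz
    obtain ⟨h1, h2⟩ := hδ z (hsub (Metric.sphere_subset_closedBall hz))
    have hzc' : z - c ≠ 0 := sub_ne_zero.mpr hzc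
    show Complex.cot (Real.pi * z) / (z ^ (2 * m) - 1) = (z - c) ^ (-2 : ℤ) • F z
    rw [Complex.cot_eq_cos_div_sin, hF_def]
    have hsz : Complex.sin (Real.pi * z) = (z - c) * S z := hfS z
    have hzp : (z - c) ^ (-2 : ℤ) = ((z - c) * (z - c))⁻¹ := by
      rw [zpow_neg, zpow_two]
    rw [hsz, hfac z, smul_eq_mul, hzp]
    field_simp
  rw [hEq, ← smul_eq_mul, ← hkey, hFderiv]

lemma gaussC (m : ℕ) (hm : 1 ≤ m) :
    ∑ k ∈ Finset.range (2 * m), (k : ℂ) = (m : ℂ) * (2 * m - 1) := by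
  rw [← Nat.cast_sum]
  have h := Finset.sum_range_id_mul_two (2 * m)
  have h2 : (∑ k ∈ Finset.range (2 * m), k) = m * (2 * m - 1) := by
    have h3 : m * (2 * m - 1) * 2 = 2 * m * (2 * m - 1) := by ring
    omega
  rw [h2]
  push_cast [Nat.cast_sub (by omega : 1 ≤ 2 * m)]
  ring

lemma sin_pi_c : Complex.sin (Real.pi * 1) = 0 := by
  rw [mul_one, ← Complex.ofReal_sin, Real.sin_pi, Complex.ofReal_zero]

lemma cos_pi_c : Complex.cos (Real.pi * 1) = -1 := by
  rw [mul_one, ← Complex.ofReal_cos, Real.cos_pi]; norm_num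

lemma sin_pi_neg : Complex.sin (Real.pi * (-1)) = 0 := by
  rw [mul_neg_one, ← Complex.ofReal_neg, ← Complex.ofReal_sin, Real.sin_neg, Real.sin_pi]
  norm_num

lemma cos_pi_neg : Complex.cos (Real.pi * (-1)) = -1 := by
  rw [mul_neg_one, ← Complex.ofReal_neg, ← Complex.ofReal_cos, Real.cos_neg, Real.cos_pi]
  norm_num

theorem residue_at_pm_one (m : ℕ) (hm : 1 ≤ m) :
    ResidueAt (fun z => Complex.cot (Real.pi * z) / (z ^ (2 * m) - 1)) 1
      (-((2 * (m : ℂ) - 1) / (4 * m * Real.pi))) ∧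
    ResidueAt (fun z => Complex.cot (Real.pi * z) / (z ^ (2 * m) - 1)) (-1)
      (-((2 * (m : ℂ) - 1) / (4 * m * Real.pi))) := by
  have hm0 : (m : ℂ) ≠ 0 := Nat.cast_ne_zero.mpr (by omega)
  have hπ : (Real.pi : ℂ) ≠ 0 := ofReal_ne_zero.mpr Real.pi_ne_zero
  constructor
  · have key := residue_key m 1 (2 * m) ((m : ℂ) * (2 * m - 1))
      (fun z => ∑ k ∈ Finset.range (2 * m), z ^ k)
      (Differentiable.fun_sum fun k _ => differentiable_pow k)
      (fun z => by linear_combination -geom_sum_mul z (2 * m))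
      (by push_cast; simp)
      (mul_ne_zero two_ne_zero hm0)
      ?_ sin_pi_c cos_pi_c
    · convert key using 1
      have h2m : (2 : ℂ) * m ≠ 0 := mul_ne_zero two_ne_zero hm0
      field_simp
      ring
    · have hd : HasDerivAt (fun z : ℂ => ∑ k ∈ Finset.range (2 * m), z ^ k)
          (∑ k ∈ Finset.range (2 * m), (k : ℂ) * (1 : ℂ) ^ (k - 1)) 1 :=
        HasDerivAt.fun_sum fun k _ => hasDerivAt_pow k 1
      rw [hd.deriv]
      simp only [one_pow, mul_one]
      exact gaussC m hm
  · have key := residue_key m (-1) (-(2 * m)) ((m : ℂ) * (2 * m - 1))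
      (fun z => -∑ k ∈ Finset.range (2 * m), (-z) ^ k)
      (Differentiable.neg (Differentiable.fun_sum fun k _ =>
        (differentiable_pow k).comp differentiable_neg))
      ?_ (by push_cast; simp) (neg_ne_zero.mpr (mul_ne_zero two_ne_zero hm0)) ?_ sin_pi_neg cos_pi_neg
    · convert key using 1
      have h2m : (2 : ℂ) * m ≠ 0 := mul_ne_zero two_ne_zero hm0
      field_simp
      ring
    · intro z
      have h := geom_sum_mul (-z) (2 * m)
      rw [Even.neg_pow (even_two_mul m)] at h
      linear_combination -h
    · have hd : HasDerivAt (fun z : ℂ => -∑ k ∈ Finset.range (2 * m), (-z) ^ k)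
          (-∑ k ∈ Finset.range (2 * m), (k : ℂ) * (-(-1 : ℂ)) ^ (k - 1) * (-1)) (-1) := by
        refine HasDerivAt.neg (HasDerivAt.fun_sum fun k _ => ?_)
        exact (hasDerivAt_pow k (-(-1 : ℂ))).comp (-1) (hasDerivAt_neg (-1 : ℂ))
      rw [hd.deriv]
      simp only [neg_neg, one_pow, mul_one, mul_neg_one, Finset.sum_neg_distrib, neg_neg]
      exact gaussC m hm
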